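/- The shuffle product on the tensor module T(V) = ⨁_{n∈ℕ} V^{⊗n} of an R-module V, defined on homogeneous tensors by μ_sh((v_1⊗…⊗v_p) ⊗ (v_{p+1}⊗…⊗v_{p+q})) = Σ_{σ ∈ Sh(p,q)} v_{σ^{−1}(1)} ⊗ … ⊗ v_{σ^{−1}(p+q)} and extended bilinearly, is associative and commutative, with the empty tensor 1 ∈ R = V^{⊗0} as a two-sided unit; thus (T(V), μ_sh) is a commutative associative unital R-algebra. -/

import Mathlib

open scoped DirectSum

/-- The tensor module `T(V) = ⨁_{n∈ℕ} V^{⊗n}`. -/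
abbrev TensorModule (R V : Type) [CommRing R] [AddCommGroup V] [Module R V] :=
  ⨁ n : ℕ, PiTensorProduct R (fun _ : Fin n => V)

/-- The canonical inclusion `V^{⊗n} → T(V)`. -/
noncomputable def tmOf (R V : Type) [CommRing R] [AddCommGroup V] [Module R V] (n : ℕ) :
    PiTensorProduct R (fun _ : Fin n => V) →ₗ[R] TensorModule R V :=
  DirectSum.lof R ℕ (fun n => PiTensorProduct R (fun _ : Fin n => V)) n

/-- A permutation `σ` of `Fin (p+q)` is a `(p,q)`-shuffle if it is strictly increasing on
the first `p` positions and on the last `q` positions. -/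
def IsShuffle (p q : ℕ) (σ : Equiv.Perm (Fin (p + q))) : Prop :=
  (∀ i j : Fin p, i < j → σ (Fin.castAdd q i) < σ (Fin.castAdd q j)) ∧
  (∀ i j : Fin q, i < j → σ (Fin.natAdd p i) < σ (Fin.natAdd p j))

instance (p q : ℕ) : DecidablePred (IsShuffle p q) := fun σ => by
  unfold IsShuffle; infer_instance

namespace ShuffleAux

open Equiv Fin Finset

variable {m n : ℕ}

/-- block permutation -/
def blockPerm (σ : Perm (Fin m)) (τ : Perm (Fin n)) : Perm (Fin (m + n)) :=
  finSumFinEquiv.permCongr (σ.sumCongr τ)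

@[simp] lemma blockPerm_castAdd (σ : Perm (Fin m)) (τ : Perm (Fin n)) (i : Fin m) :
    blockPerm σ τ (Fin.castAdd n i) = Fin.castAdd n (σ i) := by
  simp [blockPerm]

@[simp] lemma blockPerm_natAdd (σ : Perm (Fin m)) (τ : Perm (Fin n)) (j : Fin n) :
    blockPerm σ τ (Fin.natAdd m j) = Fin.natAdd m (τ j) := by
  simp [blockPerm]

lemma eq_castAdd_or_natAdd (y : Fin (m + n)) :
    (∃ i : Fin m, y = Fin.castAdd n i) ∨ (∃ j : Fin n, y = Fin.natAdd m j) := by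
  rcases lt_or_ge y.val m with h | h
  · exact Or.inl ⟨⟨y.val, h⟩, by ext; rfl⟩
  · exact Or.inr ⟨⟨y.val - m, by omega⟩, by ext; simp; omega⟩

@[simp] lemma blockPerm_inv (σ : Perm (Fin m)) (τ : Perm (Fin n)) :
    (blockPerm σ τ)⁻¹ = blockPerm σ⁻¹ τ⁻¹ := by
  rw [eq_comm, eq_inv_iff_mul_eq_one]
  ext x
  rcases eq_castAdd_or_natAdd x with ⟨i, rfl⟩ | ⟨j, rfl⟩ <;>
    simp [Equiv.Perm.mul_apply]

lemma append_comp_blockPerm_inv {α : Type*} (f : Fin m → α) (g : Fin n → α)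
    (σ : Perm (Fin m)) (τ : Perm (Fin n)) :
    Fin.append (f ∘ ⇑σ⁻¹) (g ∘ ⇑τ⁻¹) = Fin.append f g ∘ ⇑(blockPerm σ τ)⁻¹ := by
  funext x
  rcases eq_castAdd_or_natAdd x with ⟨i, rfl⟩ | ⟨j, rfl⟩ <;>
    simp [Fin.append_left, Fin.append_right]

lemma isShuffle_one (p q : ℕ) : IsShuffle p q 1 :=
  ⟨fun i j h => by simpa using Fin.strictMono_castAdd q h,
   fun i j h => by simpa using Fin.strictMono_natAdd p h⟩

lemma perm_eq_one_of_strictMono {k : ℕ} (σ : Perm (Fin k)) (h : StrictMono ⇑σ) : σ = 1 := by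
  have h2 : StrictMono (⇑(1 : Perm (Fin k))) := fun a b hab => hab
  have : ⇑σ = ⇑(1 : Perm (Fin k)) :=
    (@StrictMono.range_inj (Fin k) (Fin k) _ _ (inferInstance : WellFoundedLT (Fin k)) _ _ h h2).mp (by
      rw [Set.range_eq_univ.mpr σ.surjective, Set.range_eq_univ.mpr (1 : Perm (Fin k)).surjective])
  exact Equiv.coe_fn_injective this

/-- The shuffle determined by a subset `A` (positions of the first block). -/
noncomputable def shuffleOfSet (A : Finset (Fin (m + n))) (hA : A.card = m)
    (hAc : Aᶜ.card = n) : Perm (Fin (m + n)) :=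
  Equiv.ofBijective
    (fun x => Fin.addCases (fun i => A.orderEmbOfFin hA i) (fun j => Aᶜ.orderEmbOfFin hAc j) x)
    (by
      apply Finite.injective_iff_bijective.mp
      intro a b hab
      rcases eq_castAdd_or_natAdd a with ⟨i, rfl⟩ | ⟨i, rfl⟩ <;>
        rcases eq_castAdd_or_natAdd b with ⟨j, rfl⟩ | ⟨j, rfl⟩ <;>
          simp only [Fin.addCases_left, Fin.addCases_right] at hab
      · have := (A.orderEmbOfFin hA).injective hab; subst this; rfl
      · exfalso
        have h1 := A.orderEmbOfFin_mem hA i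
        have h2 := Aᶜ.orderEmbOfFin_mem hAc j
        rw [hab] at h1; rw [Finset.mem_compl] at h2; exact h2 h1
      · exfalso
        have h1 := A.orderEmbOfFin_mem hA j
        have h2 := Aᶜ.orderEmbOfFin_mem hAc i
        rw [← hab] at h1; rw [Finset.mem_compl] at h2; exact h2 h1
      · have := (Aᶜ.orderEmbOfFin hAc).injective hab; subst this; rfl)

@[simp] lemma shuffleOfSet_castAdd (A : Finset (Fin (m + n))) (hA : A.card = m)
    (hAc : Aᶜ.card = n) (i : Fin m) :
    shuffleOfSet A hA hAc (Fin.castAdd n i) = A.orderEmbOfFin hA i := by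
  simp [shuffleOfSet]

@[simp] lemma shuffleOfSet_natAdd (A : Finset (Fin (m + n))) (hA : A.card = m)
    (hAc : Aᶜ.card = n) (j : Fin n) :
    shuffleOfSet A hA hAc (Fin.natAdd m j) = Aᶜ.orderEmbOfFin hAc j := by
  simp [shuffleOfSet]

lemma isShuffle_shuffleOfSet (A : Finset (Fin (m + n))) (hA : A.card = m)
    (hAc : Aᶜ.card = n) : IsShuffle m n (shuffleOfSet A hA hAc) :=
  ⟨fun i j h => by simpa using (A.orderEmbOfFin hA).strictMono h,
   fun i j h => by simpa using (Aᶜ.orderEmbOfFin hAc).strictMono h⟩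

/-- A shuffle is determined by where it maps the first block. -/
lemma shuffle_eq_shuffleOfSet (A : Finset (Fin (m + n))) (hA : A.card = m)
    (hAc : Aᶜ.card = n) (σ : Perm (Fin (m + n))) (hσ : IsShuffle m n σ)
    (hmem : ∀ i : Fin m, σ (Fin.castAdd n i) ∈ A) :
    σ = shuffleOfSet A hA hAc := by
  have hmono1 : StrictMono (fun i : Fin m => σ (Fin.castAdd n i)) := fun i j h => hσ.1 i j h
  have h1 : (fun i : Fin m => σ (Fin.castAdd n i)) = ⇑(A.orderEmbOfFin hA) :=
    Finset.orderEmbOfFin_unique hA hmem hmono1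
  have hmem2 : ∀ j : Fin n, σ (Fin.natAdd m j) ∈ Aᶜ := by
    intro j
    rw [Finset.mem_compl]
    intro hj
    -- σ (natAdd m j) ∈ A = range of orderEmbOfFin = range of σ ∘ castAdd
    have : σ (Fin.natAdd m j) ∈ Set.range (A.orderEmbOfFin hA) := by
      rw [Finset.range_orderEmbOfFin]; exact hj
    rw [← h1] at this
    obtain ⟨i, hi⟩ := this
    have := σ.injective hi
    have h2 : (Fin.castAdd n i).val = (Fin.natAdd m j).val := congrArg Fin.val this
    simp at h2
    omega
  have hmono2 : StrictMono (fun j : Fin n => σ (Fin.natAdd m j)) := fun i j h => hσ.2 i j h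
  have h2 : (fun j : Fin n => σ (Fin.natAdd m j)) = ⇑(Aᶜ.orderEmbOfFin hAc) :=
    Finset.orderEmbOfFin_unique hAc hmem2 hmono2
  ext x
  rcases eq_castAdd_or_natAdd x with ⟨i, rfl⟩ | ⟨j, rfl⟩
  · rw [shuffleOfSet_castAdd, ← h1]
  · rw [shuffleOfSet_natAdd, ← h2]

/-- Existence of the coset decomposition. -/
lemma exists_decomp (π : Perm (Fin (m + n))) :
    ∃ (τ : Perm (Fin (m + n))) (σ₁ : Perm (Fin m)) (σ₂ : Perm (Fin n)),
      IsShuffle m n τ ∧ π = τ * blockPerm σ₁ σ₂ := by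
  classical
  set A : Finset (Fin (m + n)) := Finset.image (fun i => π (Fin.castAdd n i)) Finset.univ with hAdef
  have hA : A.card = m := by
    rw [hAdef, Finset.card_image_of_injective _
      (fun a b hab => Fin.castAdd_injective _ _ (π.injective hab))]
    simp
  have hAc : Aᶜ.card = n := by
    rw [Finset.card_compl, hA]; simp
  set τ := shuffleOfSet A hA hAc with hτdef
  have hτ : IsShuffle m n τ := isShuffle_shuffleOfSet A hA hAc
  set ρ := τ⁻¹ * π with hρdef
  have h₁ : ∀ i : Fin m, (ρ (Fin.castAdd n i)).val < m := by
    intro i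
    have hmem : π (Fin.castAdd n i) ∈ A := by
      rw [hAdef]; exact Finset.mem_image_of_mem _ (Finset.mem_univ i)
    have : π (Fin.castAdd n i) ∈ Set.range (A.orderEmbOfFin hA) := by
      rw [Finset.range_orderEmbOfFin]; exact hmem
    obtain ⟨i', hi'⟩ := this
    have : ρ (Fin.castAdd n i) = Fin.castAdd n i' := by
      rw [hρdef]
      simp only [Equiv.Perm.mul_apply]
      rw [← hi', ← shuffleOfSet_castAdd A hA hAc i', ← hτdef]
      simp
    rw [this]; simpa using i'.isLt
  set f : Fin m → Fin m := fun i => ⟨(ρ (Fin.castAdd n i)).val, h₁ i⟩ with hfdef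
  have hf : ∀ i, Fin.castAdd n (f i) = ρ (Fin.castAdd n i) := fun i => by ext; rfl
  have finj : Function.Injective f := by
    intro a b hab
    have : ρ (Fin.castAdd n a) = ρ (Fin.castAdd n b) := by
      rw [← hf, ← hf, hab]
    exact Fin.castAdd_injective _ _ (ρ.injective this)
  have fbij := Finite.injective_iff_bijective.mp finj
  have h₂ : ∀ j : Fin n, m ≤ (ρ (Fin.natAdd m j)).val := by
    intro j
    by_contra h
    push_neg at h
    obtain ⟨i, hi⟩ := fbij.2 ⟨(ρ (Fin.natAdd m j)).val, h⟩
    have : ρ (Fin.castAdd n i) = ρ (Fin.natAdd m j) := by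
      rw [← hf, hi]; ext; rfl
    have h3 := congrArg Fin.val (ρ.injective this)
    simp at h3
    omega
  set g : Fin n → Fin n := fun j => ⟨(ρ (Fin.natAdd m j)).val - m, by
    have := (ρ (Fin.natAdd m j)).isLt; have := h₂ j; omega⟩ with hgdef
  have hg : ∀ j, Fin.natAdd m (g j) = ρ (Fin.natAdd m j) := fun j => by
    ext; simp [hgdef]; have := h₂ j; omega
  have ginj : Function.Injective g := by
    intro a b hab
    have : ρ (Fin.natAdd m a) = ρ (Fin.natAdd m b) := by
      rw [← hg, ← hg, hab]
    exact (Fin.strictMono_natAdd m).injective (ρ.injective this)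
  refine ⟨τ, Equiv.ofBijective f fbij,
    Equiv.ofBijective g (Finite.injective_iff_bijective.mp ginj), hτ, ?_⟩
  ext x
  rcases eq_castAdd_or_natAdd x with ⟨i, rfl⟩ | ⟨j, rfl⟩
  · have : π (Fin.castAdd n i) = τ (ρ (Fin.castAdd n i)) := by
      rw [hρdef]; simp [Equiv.Perm.mul_apply]
    rw [Equiv.Perm.mul_apply, blockPerm_castAdd, this, Equiv.ofBijective_apply, hf]
  · have : π (Fin.natAdd m j) = τ (ρ (Fin.natAdd m j)) := by
      rw [hρdef]; simp [Equiv.Perm.mul_apply]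
    rw [Equiv.Perm.mul_apply, blockPerm_natAdd, this, Equiv.ofBijective_apply, hg]

/-- Uniqueness of the coset decomposition. -/
lemma decomp_unique (τ τ' : Perm (Fin (m + n))) (σ₁ σ₁' : Perm (Fin m))
    (σ₂ σ₂' : Perm (Fin n)) (hτ : IsShuffle m n τ) (hτ' : IsShuffle m n τ')
    (h : τ * blockPerm σ₁ σ₂ = τ' * blockPerm σ₁' σ₂') :
    τ = τ' ∧ σ₁ = σ₁' ∧ σ₂ = σ₂' := by
  classical
  set A : Finset (Fin (m + n)) := Finset.image (fun i => τ (Fin.castAdd n i)) Finset.univ with hAdef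
  have hA : A.card = m := by
    rw [hAdef, Finset.card_image_of_injective _
      (fun a b hab => Fin.castAdd_injective _ _ (τ.injective hab))]
    simp
  have hAc : Aᶜ.card = n := by rw [Finset.card_compl, hA]; simp
  have hττ' : τ = τ' := by
    rw [shuffle_eq_shuffleOfSet A hA hAc τ hτ
      (fun i => by rw [hAdef]; exact Finset.mem_image_of_mem _ (Finset.mem_univ i)),
      shuffle_eq_shuffleOfSet A hA hAc τ' hτ' ?_]
    intro i
    -- τ' (castAdd n i) = (τ' * blockPerm σ₁' σ₂') (castAdd n (σ₁'⁻¹ i)) = (τ * blockPerm σ₁ σ₂) ...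
    have e1 : τ' (Fin.castAdd n i) = (τ' * blockPerm σ₁' σ₂') (Fin.castAdd n (σ₁'⁻¹ i)) := by
      simp [Equiv.Perm.mul_apply]
    rw [e1, ← h]
    simp only [Equiv.Perm.mul_apply, blockPerm_castAdd]
    rw [hAdef]
    exact Finset.mem_image_of_mem _ (Finset.mem_univ _)
  subst hττ'
  have hb : blockPerm σ₁ σ₂ = blockPerm σ₁' σ₂' := mul_left_cancel h
  constructor
  · rfl
  constructor
  · ext i
    have := congrArg (fun ρ : Perm (Fin (m+n)) => ρ (Fin.castAdd n i)) hb
    simp only [blockPerm_castAdd] at this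
    exact congrArg Fin.val (Fin.castAdd_injective _ _ this) ▸ rfl
  · ext j
    have := congrArg (fun ρ : Perm (Fin (m+n)) => ρ (Fin.natAdd m j)) hb
    simp only [blockPerm_natAdd] at this
    have := (Fin.strictMono_natAdd m).injective this
    exact congrArg Fin.val this ▸ rfl

end ShuffleAux

namespace ShuffleAux

open Equiv Fin Finset

variable {p q r : ℕ}

lemma lt_of_mono_lt {k N : ℕ} {f : Fin k → Fin N}
    (hf : ∀ i j : Fin k, i < j → f i < f j) {a b : Fin k} (h : f a < f b) : a < b := by
  rcases lt_trichotomy a b with h' | h' | h'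
  · exact h'
  · subst h'; exact absurd h (lt_irrefl _)
  · exact absurd (hf b a h') (asymm h)

@[simp] lemma finCongr_lt_iff {k l : ℕ} (h : k = l) (a b : Fin k) :
    finCongr h a < finCongr h b ↔ a < b := by
  rw [Fin.lt_def, Fin.lt_def]; simp

/-- Triple shuffles. -/
def IsShuffle3 (p q r : ℕ) (π : Perm (Fin (p + q + r))) : Prop :=
  (∀ i j : Fin p, i < j →
    π (Fin.castAdd r (Fin.castAdd q i)) < π (Fin.castAdd r (Fin.castAdd q j))) ∧
  (∀ i j : Fin q, i < j →
    π (Fin.castAdd r (Fin.natAdd p i)) < π (Fin.castAdd r (Fin.natAdd p j))) ∧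
  (∀ i j : Fin r, i < j →
    π (Fin.natAdd (p + q) i) < π (Fin.natAdd (p + q) j))

instance (p q r : ℕ) : DecidablePred (IsShuffle3 p q r) := fun π => by
  unfold IsShuffle3; infer_instance

lemma assocL {M : Type*} [AddCommMonoid M] (F : Perm (Fin (p + q + r)) → M) :
    (∑ σ ∈ Finset.univ.filter (IsShuffle p q),
      ∑ τ ∈ Finset.univ.filter (IsShuffle (p + q) r), F (τ * blockPerm σ 1)) =
    ∑ π ∈ Finset.univ.filter (IsShuffle3 p q r), F π := by
  rw [← Finset.sum_product' (f := fun σ τ => F (τ * blockPerm σ 1))]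
  apply Finset.sum_bij (i := fun x _ => x.2 * blockPerm x.1 1)
  · rintro ⟨σ, τ⟩ ha
    rw [Finset.mem_product, Finset.mem_filter, Finset.mem_filter] at ha
    obtain ⟨⟨-, hσ⟩, -, hτ⟩ := ha
    rw [Finset.mem_filter]
    refine ⟨Finset.mem_univ _, ?_, ?_, ?_⟩
    · intro i j h
      simp only [Equiv.Perm.mul_apply, blockPerm_castAdd]
      exact hτ.1 _ _ (hσ.1 i j h)
    · intro i j h
      simp only [Equiv.Perm.mul_apply, blockPerm_castAdd]
      exact hτ.1 _ _ (hσ.2 i j h)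
    · intro i j h
      simp only [Equiv.Perm.mul_apply, blockPerm_natAdd, Equiv.Perm.one_apply]
      exact hτ.2 _ _ h
  · rintro ⟨σ, τ⟩ ha ⟨σ', τ'⟩ ha' hh
    rw [Finset.mem_product, Finset.mem_filter, Finset.mem_filter] at ha ha'
    obtain ⟨h1, h2, -⟩ := decomp_unique τ τ' σ σ' 1 1 ha.2.2 ha'.2.2 hh
    exact Prod.ext h2 h1
  · intro π hπ
    rw [Finset.mem_filter] at hπ
    obtain ⟨-, hπ⟩ := hπ
    obtain ⟨τ, σ₁, σ₂, hτ, heq⟩ := exists_decomp (m := p + q) (n := r) π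
    have hval : ∀ x, π x = τ (blockPerm σ₁ σ₂ x) := fun x => by
      rw [heq]; rfl
    have hσ₂ : σ₂ = 1 := by
      apply perm_eq_one_of_strictMono
      intro a b hab
      have := hπ.2.2 a b hab
      rw [hval, hval, blockPerm_natAdd, blockPerm_natAdd] at this
      exact lt_of_mono_lt hτ.2 this
    have hσ₁ : IsShuffle p q σ₁ := by
      constructor
      · intro i j h
        have := hπ.1 i j h
        rw [hval, hval, blockPerm_castAdd, blockPerm_castAdd] at this
        exact lt_of_mono_lt hτ.1 this
      · intro i j h
        have := hπ.2.1 i j h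
        rw [hval, hval, blockPerm_castAdd, blockPerm_castAdd] at this
        exact lt_of_mono_lt hτ.1 this
    refine ⟨⟨σ₁, τ⟩, ?_, ?_⟩
    · rw [Finset.mem_product, Finset.mem_filter, Finset.mem_filter]
      exact ⟨⟨Finset.mem_univ _, hσ₁⟩, Finset.mem_univ _, hτ⟩
    · rw [heq, hσ₂]
  · intro a ha; rfl

lemma assocR {M : Type*} [AddCommMonoid M] (F : Perm (Fin (p + q + r)) → M) :
    (∑ ρ ∈ Finset.univ.filter (IsShuffle q r),
      ∑ π ∈ Finset.univ.filter (IsShuffle p (q + r)),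
        F ((finCongr (Nat.add_assoc p q r).symm).permCongr (π * blockPerm 1 ρ))) =
    ∑ π ∈ Finset.univ.filter (IsShuffle3 p q r), F π := by
  set c := finCongr (Nat.add_assoc p q r).symm with hc
  have hc1 : ∀ i : Fin p, c (Fin.castAdd (q + r) i) = Fin.castAdd r (Fin.castAdd q i) := by
    intro i; ext; simp [hc]
  have hc2 : ∀ j : Fin q, c (Fin.natAdd p (Fin.castAdd r j)) = Fin.castAdd r (Fin.natAdd p j) := by
    intro j; ext; simp [hc]
  have hc3 : ∀ k : Fin r, c (Fin.natAdd p (Fin.natAdd q k)) = Fin.natAdd (p + q) k := by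
    intro k; ext; simp [hc]; omega
  have hcs1 : ∀ i : Fin p, c.symm (Fin.castAdd r (Fin.castAdd q i)) = Fin.castAdd (q + r) i := by
    intro i; rw [← hc1]; simp
  have hcs2 : ∀ j : Fin q,
      c.symm (Fin.castAdd r (Fin.natAdd p j)) = Fin.natAdd p (Fin.castAdd r j) := by
    intro j; rw [← hc2]; simp
  have hcs3 : ∀ k : Fin r, c.symm (Fin.natAdd (p + q) k) = Fin.natAdd p (Fin.natAdd q k) := by
    intro k; rw [← hc3]; simp
  have hcmono : ∀ a b, a < b → c a < c b := by
    intro a b h; simpa [hc] using h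
  have hcsmono : ∀ a b, a < b → c.symm a < c.symm b := by
    intro a b h
    have : (c.symm a).val = a.val := by simp [hc]
    have h2 : (c.symm b).val = b.val := by simp [hc]
    rw [Fin.lt_def] at h ⊢
    omega
  rw [← Finset.sum_product' (f := fun ρ π => F (c.permCongr (π * blockPerm 1 ρ)))]
  apply Finset.sum_bij (i := fun x _ => c.permCongr (x.2 * blockPerm 1 x.1))
  · rintro ⟨ρ, π⟩ ha
    rw [Finset.mem_product, Finset.mem_filter, Finset.mem_filter] at ha
    obtain ⟨⟨-, hρ⟩, -, hπ⟩ := ha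
    rw [Finset.mem_filter]
    refine ⟨Finset.mem_univ _, ?_, ?_, ?_⟩
    · intro i j h
      simp only [Equiv.permCongr_apply, hcs1, Equiv.Perm.mul_apply, blockPerm_castAdd,
        Equiv.Perm.one_apply]
      exact hcmono _ _ (hπ.1 i j h)
    · intro i j h
      simp only [Equiv.permCongr_apply, hcs2, Equiv.Perm.mul_apply, blockPerm_natAdd]
      exact hcmono _ _ (hπ.2 _ _ (hρ.1 i j h))
    · intro i j h
      simp only [Equiv.permCongr_apply, hcs3, Equiv.Perm.mul_apply, blockPerm_natAdd]
      exact hcmono _ _ (hπ.2 _ _ (hρ.2 i j h))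
  · rintro ⟨ρ, π⟩ ha ⟨ρ', π'⟩ ha' hh
    rw [Finset.mem_product, Finset.mem_filter, Finset.mem_filter] at ha ha'
    have hh' := c.permCongr.injective hh
    obtain ⟨h1, -, h2⟩ := decomp_unique π π' 1 1 ρ ρ' ha.2.2 ha'.2.2 hh'
    exact Prod.ext h2 h1
  · intro π₀ hπ₀
    rw [Finset.mem_filter] at hπ₀
    obtain ⟨-, hπ₀⟩ := hπ₀
    set π₀' : Perm (Fin (p + (q + r))) := c.permCongr.symm π₀ with hπ₀'def
    have hback : c.permCongr π₀' = π₀ := c.permCongr.apply_symm_apply π₀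
    have hπ₀'app : ∀ x, π₀' x = c.symm (π₀ (c x)) := by
      intro x; rw [hπ₀'def]; simp [Equiv.permCongr_symm, Equiv.permCongr_apply]
    obtain ⟨τ, σ₁, σ₂, hτ, heq⟩ := exists_decomp (m := p) (n := q + r) π₀'
    have hval : ∀ x, π₀' x = τ (blockPerm σ₁ σ₂ x) := fun x => by rw [heq]; rfl
    have hσ₁ : σ₁ = 1 := by
      apply perm_eq_one_of_strictMono
      intro a b hab
      have h1 : π₀' (Fin.castAdd (q + r) a) < π₀' (Fin.castAdd (q + r) b) := by
        rw [hπ₀'app, hπ₀'app, hc1, hc1]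
        exact hcsmono _ _ (hπ₀.1 a b hab)
      rw [hval, hval, blockPerm_castAdd, blockPerm_castAdd] at h1
      exact lt_of_mono_lt hτ.1 h1
    have hσ₂ : IsShuffle q r σ₂ := by
      constructor
      · intro i j h
        have h1 : π₀' (Fin.natAdd p (Fin.castAdd r i)) < π₀' (Fin.natAdd p (Fin.castAdd r j)) := by
          rw [hπ₀'app, hπ₀'app, hc2, hc2]
          exact hcsmono _ _ (hπ₀.2.1 i j h)
        rw [hval, hval, blockPerm_natAdd, blockPerm_natAdd] at h1
        exact lt_of_mono_lt hτ.2 h1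
      · intro i j h
        have h1 : π₀' (Fin.natAdd p (Fin.natAdd q i)) < π₀' (Fin.natAdd p (Fin.natAdd q j)) := by
          rw [hπ₀'app, hπ₀'app, hc3, hc3]
          exact hcsmono _ _ (hπ₀.2.2 i j h)
        rw [hval, hval, blockPerm_natAdd, blockPerm_natAdd] at h1
        exact lt_of_mono_lt hτ.2 h1
    refine ⟨⟨σ₂, τ⟩, ?_, ?_⟩
    · rw [Finset.mem_product, Finset.mem_filter, Finset.mem_filter]
      exact ⟨⟨Finset.mem_univ _, hσ₂⟩, Finset.mem_univ _, hτ⟩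
    · rw [← hback, heq, hσ₁]
  · intro a ha; rfl

/-- The map `Sh(p,q) → Sh(q,p)`. -/
def commMap (p q : ℕ) (σ : Perm (Fin (p + q))) : Perm (Fin (q + p)) :=
  ((finAddFlip (m := p) (n := q)).symm.trans σ).trans (finCongr (Nat.add_comm p q))

lemma commMap_castAdd (σ : Perm (Fin (p + q))) (i : Fin q) :
    commMap p q σ (Fin.castAdd p i) = finCongr (Nat.add_comm p q) (σ (Fin.natAdd p i)) := by
  have h : (finAddFlip (m := p) (n := q)).symm (Fin.castAdd p i) = Fin.natAdd p i := by
    rw [Equiv.symm_apply_eq, finAddFlip_apply_natAdd]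
  simp [commMap, h]

lemma commMap_natAdd (σ : Perm (Fin (p + q))) (j : Fin p) :
    commMap p q σ (Fin.natAdd q j) = finCongr (Nat.add_comm p q) (σ (Fin.castAdd q j)) := by
  have h : (finAddFlip (m := p) (n := q)).symm (Fin.natAdd q j) = Fin.castAdd q j := by
    rw [Equiv.symm_apply_eq, finAddFlip_apply_castAdd]
  simp [commMap, h]

lemma isShuffle_commMap (σ : Perm (Fin (p + q))) (hσ : IsShuffle p q σ) :
    IsShuffle q p (commMap p q σ) := by
  constructor
  · intro i j h
    rw [commMap_castAdd, commMap_castAdd, finCongr_lt_iff]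
    exact hσ.2 i j h
  · intro i j h
    rw [commMap_natAdd, commMap_natAdd, finCongr_lt_iff]
    exact hσ.1 i j h

@[simp] lemma finCongr_finCongr_symm' {k l : ℕ} (h : k = l) (h' : l = k) (a : Fin k) :
    finCongr h' (finCongr h a) = a := by
  ext; simp

lemma commMap_invol (σ : Perm (Fin (p + q))) :
    commMap q p (commMap p q σ) = σ := by
  ext x
  rcases eq_castAdd_or_natAdd x with ⟨i, rfl⟩ | ⟨j, rfl⟩
  · rw [commMap_castAdd, commMap_natAdd, finCongr_finCongr_symm']
  · rw [commMap_natAdd, commMap_castAdd, finCongr_finCongr_symm']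

lemma commMap_inj (σ σ' : Perm (Fin (p + q))) (h : commMap p q σ = commMap p q σ') : σ = σ' := by
  have := congrArg (commMap q p) h
  rwa [commMap_invol, commMap_invol] at this

lemma commSum {M : Type*} [AddCommMonoid M] (G : Perm (Fin (q + p)) → M) :
    ∑ τ ∈ Finset.univ.filter (IsShuffle q p), G τ =
      ∑ σ ∈ Finset.univ.filter (IsShuffle p q), G (commMap p q σ) := by
  symm
  apply Finset.sum_bij (i := fun σ _ => commMap p q σ)
  · intro σ hσ
    rw [Finset.mem_filter] at hσ ⊢
    exact ⟨Finset.mem_univ _, isShuffle_commMap σ hσ.2⟩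
  · intro a _ b _ hab
    exact commMap_inj a b hab
  · intro τ hτ
    rw [Finset.mem_filter] at hτ
    refine ⟨commMap q p τ, ?_, (commMap_invol (p := q) (q := p) τ)⟩
    rw [Finset.mem_filter]
    exact ⟨Finset.mem_univ _, isShuffle_commMap τ hτ.2⟩
  · intro a _; rfl

lemma append_flip {α : Type*} (v : Fin p → α) (w : Fin q → α) (x : Fin (p + q)) :
    Fin.append w v (finAddFlip x) = Fin.append v w x := by
  rcases eq_castAdd_or_natAdd x with ⟨i, rfl⟩ | ⟨j, rfl⟩
  · rw [finAddFlip_apply_castAdd, Fin.append_right, Fin.append_left]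
  · rw [finAddFlip_apply_natAdd, Fin.append_left, Fin.append_right]

end ShuffleAux

namespace ShuffleAux

open Equiv Fin Finset PiTensorProduct

variable {R V : Type} [CommRing R] [AddCommGroup V] [Module R V]

lemma tmOf_cast {m n : ℕ} (h : m = n) (x : PiTensorProduct R (fun _ : Fin m => V)) :
    tmOf R V m x = tmOf R V n (PiTensorProduct.reindex R (fun _ => V) (finCongr h) x) := by
  subst h
  rw [finCongr_refl, PiTensorProduct.reindex_refl]
  rfl

lemma tm_induction (P : TensorModule R V → Prop) (h0 : P 0)
    (hgen : ∀ (n : ℕ) (v : Fin n → V), P (tmOf R V n (tprod R v)))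
    (hsmul : ∀ (c : R) (x : TensorModule R V), P x → P (c • x))
    (hadd : ∀ x y, P x → P y → P (x + y)) : ∀ x, P x := by
  intro x
  refine DirectSum.induction_on x h0 ?_ hadd
  intro i y
  show P (tmOf R V i y)
  induction y using PiTensorProduct.induction_on with
  | smul_tprod c f =>
      rw [map_smul]
      exact hsmul c _ (hgen i f)
  | add a b ha hb =>
      rw [map_add]
      exact hadd _ _ ha hb

lemma permCongr_inv {α β : Type*} (e : α ≃ β) (μ : Equiv.Perm α) :
    (e.permCongr μ)⁻¹ = e.permCongr μ⁻¹ := by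
  have h : e.permCongr μ * e.permCongr μ⁻¹ = 1 := by
    ext x; simp [Equiv.Perm.mul_apply]
  exact inv_eq_of_mul_eq_one_right h

end ShuffleAux

namespace ShuffleAux

open Equiv Fin Finset PiTensorProduct

variable {R V : Type} [CommRing R] [AddCommGroup V] [Module R V]

lemma sh_filter_zero_left (q : ℕ) :
    Finset.univ.filter (IsShuffle 0 q) = {(1 : Perm (Fin (0 + q)))} := by
  ext σ
  simp only [Finset.mem_filter, Finset.mem_univ, true_and, Finset.mem_singleton]
  constructor
  · intro hσ
    apply perm_eq_one_of_strictMono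
    intro a b hab
    have ha : a = Fin.natAdd 0 ⟨a.val, by omega⟩ := by apply Fin.ext; simp
    have hb : b = Fin.natAdd 0 ⟨b.val, by omega⟩ := by apply Fin.ext; simp
    rw [ha, hb]
    exact hσ.2 _ _ (by rw [Fin.mk_lt_mk]; exact hab)
  · rintro rfl; exact isShuffle_one 0 q

lemma sh_filter_zero_right (p : ℕ) :
    Finset.univ.filter (IsShuffle p 0) = {(1 : Perm (Fin (p + 0)))} := by
  ext σ
  simp only [Finset.mem_filter, Finset.mem_univ, true_and, Finset.mem_singleton]
  constructor
  · intro hσ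
    apply perm_eq_one_of_strictMono
    intro a b hab
    have ha : a = Fin.castAdd 0 ⟨a.val, by omega⟩ := by apply Fin.ext; simp
    have hb : b = Fin.castAdd 0 ⟨b.val, by omega⟩ := by apply Fin.ext; simp
    rw [ha, hb]
    exact hσ.1 _ _ (by rw [Fin.mk_lt_mk]; exact hab)
  · rintro rfl; exact isShuffle_one p 0

section WithMul

variable (mul : TensorModule R V →ₗ[R] TensorModule R V →ₗ[R] TensorModule R V)
  (hmul : ∀ (p q : ℕ) (v : Fin p → V) (w : Fin q → V),
      mul (tmOf R V p (PiTensorProduct.tprod R v))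
          (tmOf R V q (PiTensorProduct.tprod R w)) =
        tmOf R V (p + q)
          (∑ σ ∈ Finset.univ.filter (IsShuffle p q),
            PiTensorProduct.tprod R (fun k => Fin.append v w (σ⁻¹ k))))

include hmul

lemma one_mul_gen (q : ℕ) (w : Fin q → V) :
    mul (tmOf R V 0 (tprod R (fun i : Fin 0 => i.elim0))) (tmOf R V q (tprod R w)) =
      tmOf R V q (tprod R w) := by
  rw [hmul 0 q _ w, sh_filter_zero_left, Finset.sum_singleton,
    tmOf_cast (Nat.zero_add q).symm.symm]
  congr 1
  rw [PiTensorProduct.reindex_tprod]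
  congr 1
  funext k
  have : (finCongr (Nat.zero_add q).symm.symm).symm k = Fin.natAdd 0 k := by ext; simp
  simp only [inv_one, Equiv.Perm.one_apply, this, Fin.append_right]

lemma mul_one_gen (p : ℕ) (v : Fin p → V) :
    mul (tmOf R V p (tprod R v)) (tmOf R V 0 (tprod R (fun i : Fin 0 => i.elim0))) =
      tmOf R V p (tprod R v) := by
  rw [hmul p 0 v _, sh_filter_zero_right, Finset.sum_singleton,
    tmOf_cast (rfl : p + 0 = p)]
  congr 1
  rw [PiTensorProduct.reindex_tprod]
  congr 1
  funext k
  have : (finCongr (rfl : p + 0 = p)).symm k = Fin.castAdd 0 k := by ext; simp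
  simp only [inv_one, Equiv.Perm.one_apply, this, Fin.append_left]

lemma comm_gen (p q : ℕ) (v : Fin p → V) (w : Fin q → V) :
    mul (tmOf R V p (tprod R v)) (tmOf R V q (tprod R w)) =
      mul (tmOf R V q (tprod R w)) (tmOf R V p (tprod R v)) := by
  rw [hmul p q v w, hmul q p w v, tmOf_cast (Nat.add_comm q p)]
  congr 1
  rw [map_sum]
  rw [commSum (G := fun τ => PiTensorProduct.reindex R (fun _ => V) (finCongr (Nat.add_comm q p))
    (tprod R (fun k => Fin.append w v (τ⁻¹ k))))]
  apply Finset.sum_congr rfl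
  intro σ hσ
  rw [PiTensorProduct.reindex_tprod]
  congr 1
  funext k
  show Fin.append v w (σ⁻¹ k) =
    Fin.append w v ((commMap p q σ)⁻¹ ((finCongr (Nat.add_comm q p)).symm k))
  have h1 : (commMap p q σ)⁻¹ ((finCongr (Nat.add_comm q p)).symm k) = finAddFlip (σ⁻¹ k) := by
    show (commMap p q σ).symm _ = _
    rw [Equiv.symm_apply_eq]
    simp only [commMap, Equiv.trans_apply, Equiv.symm_apply_apply]
    rw [show ∀ x, σ (σ⁻¹ x) = x from σ.apply_symm_apply]
    ext
    simp
  rw [h1, append_flip]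

end WithMul
end ShuffleAux

namespace ShuffleAux

open Equiv Fin Finset PiTensorProduct

variable {R V : Type} [CommRing R] [AddCommGroup V] [Module R V]
variable {p q r : ℕ}

lemma append_term_left {α : Type*} (v : Fin p → α) (w : Fin q → α) (u : Fin r → α)
    (σ : Perm (Fin (p + q))) (τ : Perm (Fin (p + q + r))) :
    (fun k => Fin.append (fun k' => Fin.append v w (σ⁻¹ k')) u (τ⁻¹ k)) =
      fun k => Fin.append (Fin.append v w) u ((τ * blockPerm σ 1 : Perm (Fin (p + q + r)))⁻¹ k) := by
  funext k
  have h1 : (fun k' => Fin.append v w (σ⁻¹ k')) = Fin.append v w ∘ ⇑σ⁻¹ := rfl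
  have h2 : u = u ∘ ⇑((1 : Perm (Fin r))⁻¹) := by funext x; simp
  conv_lhs => rw [h1, h2, append_comp_blockPerm_inv]
  rw [mul_inv_rev, Equiv.Perm.mul_apply]
  rfl

lemma append_term_right {α : Type*} (v : Fin p → α) (w : Fin q → α) (u : Fin r → α)
    (ρ : Perm (Fin (q + r))) (π : Perm (Fin (p + (q + r)))) :
    (fun k => Fin.append v (fun k' => Fin.append w u (ρ⁻¹ k')) (π⁻¹ k)) =
      fun k => Fin.append v (Fin.append w u) ((π * blockPerm 1 ρ : Perm (Fin (p + (q + r))))⁻¹ k) := by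
  funext k
  have h1 : (fun k' => Fin.append w u (ρ⁻¹ k')) = Fin.append w u ∘ ⇑ρ⁻¹ := rfl
  have h2 : v = v ∘ ⇑((1 : Perm (Fin p))⁻¹) := by funext x; simp
  conv_lhs => rw [h1, h2, append_comp_blockPerm_inv]
  rw [mul_inv_rev, Equiv.Perm.mul_apply]
  rfl

lemma cast_term (v : Fin p → V) (w : Fin q → V) (u : Fin r → V)
    (μ : Perm (Fin (p + (q + r)))) :
    tmOf R V (p + (q + r)) (tprod R (fun k => Fin.append v (Fin.append w u) (μ⁻¹ k))) =
      tmOf R V (p + q + r) (tprod R (fun k => Fin.append (Fin.append v w) u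
        (((finCongr (Nat.add_assoc p q r).symm).permCongr μ)⁻¹ k))) := by
  rw [tmOf_cast (Nat.add_assoc p q r).symm]
  congr 1
  rw [PiTensorProduct.reindex_tprod]
  congr 1
  funext k
  rw [permCongr_inv, Equiv.permCongr_apply]
  rw [congrFun (Fin.append_assoc v w u) _]
  show Fin.append v (Fin.append w u) (μ⁻¹ ((finCongr (Nat.add_assoc p q r).symm).symm k)) =
    Fin.append v (Fin.append w u) (Fin.cast (Nat.add_assoc p q r)
      (finCongr (Nat.add_assoc p q r).symm (μ⁻¹ ((finCongr (Nat.add_assoc p q r).symm).symm k))))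
  congr 1

section WithMul

variable (mul : TensorModule R V →ₗ[R] TensorModule R V →ₗ[R] TensorModule R V)
  (hmul : ∀ (p q : ℕ) (v : Fin p → V) (w : Fin q → V),
      mul (tmOf R V p (PiTensorProduct.tprod R v))
          (tmOf R V q (PiTensorProduct.tprod R w)) =
        tmOf R V (p + q)
          (∑ σ ∈ Finset.univ.filter (IsShuffle p q),
            PiTensorProduct.tprod R (fun k => Fin.append v w (σ⁻¹ k))))

include hmul

lemma assoc_gen (p q r : ℕ) (v : Fin p → V) (w : Fin q → V) (u : Fin r → V) :
    mul (mul (tmOf R V p (tprod R v)) (tmOf R V q (tprod R w))) (tmOf R V r (tprod R u)) =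
      mul (tmOf R V p (tprod R v)) (mul (tmOf R V q (tprod R w)) (tmOf R V r (tprod R u))) := by
  have hL :
      mul (mul (tmOf R V p (tprod R v)) (tmOf R V q (tprod R w))) (tmOf R V r (tprod R u)) =
        ∑ σ ∈ Finset.univ.filter (IsShuffle p q),
          ∑ τ ∈ Finset.univ.filter (IsShuffle (p + q) r),
            tmOf R V (p + q + r)
              (tprod R (fun k => Fin.append (Fin.append v w) u ((τ * blockPerm σ 1 : Perm (Fin (p + q + r)))⁻¹ k))) := by
    rw [hmul p q v w, map_sum, map_sum, LinearMap.sum_apply]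
    apply Finset.sum_congr rfl
    intro σ _
    rw [hmul (p + q) r _ u, map_sum]
    apply Finset.sum_congr rfl
    intro τ _
    rw [append_term_left v w u σ τ]
  have hR :
      mul (tmOf R V p (tprod R v)) (mul (tmOf R V q (tprod R w)) (tmOf R V r (tprod R u))) =
        ∑ ρ ∈ Finset.univ.filter (IsShuffle q r),
          ∑ π ∈ Finset.univ.filter (IsShuffle p (q + r)),
            tmOf R V (p + q + r)
              (tprod R (fun k => Fin.append (Fin.append v w) u
                (((finCongr (Nat.add_assoc p q r).symm).permCongr
                  (π * blockPerm 1 ρ))⁻¹ k))) := by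
    rw [hmul q r w u, map_sum, map_sum]
    apply Finset.sum_congr rfl
    intro ρ _
    rw [hmul p (q + r) v _, map_sum]
    apply Finset.sum_congr rfl
    intro π _
    rw [append_term_right v w u ρ π]
    exact cast_term v w u (π * blockPerm 1 ρ)
  rw [hL, hR]
  exact (assocL (fun π => tmOf R V (p + q + r)
      (tprod R (fun k => Fin.append (Fin.append v w) u (π⁻¹ k))))).trans
    (assocR (fun π => tmOf R V (p + q + r)
      (tprod R (fun k => Fin.append (Fin.append v w) u (π⁻¹ k))))).symm

end WithMul
end ShuffleAux


/-- The (sign-free) shuffle product on the tensor module `T(V) = ⨁_{n∈ℕ} V^{⊗n}`,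
i.e. the bilinear map given on homogeneous tensors by
`μ_sh((v₁⊗…⊗v_p) ⊗ (v_{p+1}⊗…⊗v_{p+q})) = Σ_{σ ∈ Sh(p,q)} v_{σ⁻¹(1)} ⊗ … ⊗ v_{σ⁻¹(p+q)}`,
is associative and commutative with the empty tensor `1 ∈ R = V^{⊗0}` as a two-sided
unit; thus `(T(V), μ_sh)` is a commutative associative unital `R`-algebra. -/
theorem shuffle_product_comm_assoc_unital {R V : Type} [CommRing R] [AddCommGroup V]
    [Module R V]
    (mul : TensorModule R V →ₗ[R] TensorModule R V →ₗ[R] TensorModule R V)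
    (hmul : ∀ (p q : ℕ) (v : Fin p → V) (w : Fin q → V),
      mul (tmOf R V p (PiTensorProduct.tprod R v))
          (tmOf R V q (PiTensorProduct.tprod R w)) =
        tmOf R V (p + q)
          (∑ σ ∈ Finset.univ.filter (IsShuffle p q),
            PiTensorProduct.tprod R (fun k => Fin.append v w (σ⁻¹ k)))) :
    (∀ x y z : TensorModule R V, mul (mul x y) z = mul x (mul y z)) ∧
      (∀ x y : TensorModule R V, mul x y = mul y x) ∧
      (∀ x : TensorModule R V,
        mul (tmOf R V 0 (PiTensorProduct.tprod R (fun i : Fin 0 => i.elim0))) x = x ∧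
        mul x (tmOf R V 0 (PiTensorProduct.tprod R (fun i : Fin 0 => i.elim0))) = x) := by
  refine ⟨?_, ?_, ?_⟩
  · -- associativity
    intro x
    refine ShuffleAux.tm_induction
      (fun x => ∀ y z, mul (mul x y) z = mul x (mul y z)) ?_ ?_ ?_ ?_ x
    · intro y z; simp
    · intro n v
      intro y
      refine ShuffleAux.tm_induction
        (fun y => ∀ z, mul (mul (tmOf R V n (PiTensorProduct.tprod R v)) y) z =
          mul (tmOf R V n (PiTensorProduct.tprod R v)) (mul y z)) ?_ ?_ ?_ ?_ y
      · intro z; simp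
      · intro m w
        intro z
        refine ShuffleAux.tm_induction
          (fun z => mul (mul (tmOf R V n (PiTensorProduct.tprod R v))
              (tmOf R V m (PiTensorProduct.tprod R w))) z =
            mul (tmOf R V n (PiTensorProduct.tprod R v))
              (mul (tmOf R V m (PiTensorProduct.tprod R w)) z)) ?_ ?_ ?_ ?_ z
        · simp
        · intro l u
          exact ShuffleAux.assoc_gen mul hmul n m l v w u
        · intro c z h
          simp only [map_smul, LinearMap.smul_apply, h]
        · intro a b ha hb
          simp only [map_add, LinearMap.add_apply, ha, hb]
      · intro c y h z
        simp only [map_smul, LinearMap.smul_apply, h z]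
      · intro a b ha hb z
        simp only [map_add, LinearMap.add_apply, ha z, hb z]
    · intro c x h y z
      simp only [map_smul, LinearMap.smul_apply, h y z]
    · intro a b ha hb y z
      simp only [map_add, LinearMap.add_apply, ha y z, hb y z]
  · -- commutativity
    intro x
    refine ShuffleAux.tm_induction (fun x => ∀ y, mul x y = mul y x) ?_ ?_ ?_ ?_ x
    · intro y; simp
    · intro n v y
      refine ShuffleAux.tm_induction
        (fun y => mul (tmOf R V n (PiTensorProduct.tprod R v)) y =
          mul y (tmOf R V n (PiTensorProduct.tprod R v))) ?_ ?_ ?_ ?_ y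
      · simp
      · intro m w
        exact ShuffleAux.comm_gen mul hmul n m v w
      · intro c y h
        simp only [map_smul, LinearMap.smul_apply, h]
      · intro a b ha hb
        simp only [map_add, LinearMap.add_apply, ha, hb]
    · intro c x h y
      simp only [map_smul, LinearMap.smul_apply, h y]
    · intro a b ha hb y
      simp only [map_add, LinearMap.add_apply, ha y, hb y]
  · -- units
    intro x
    constructor
    · refine ShuffleAux.tm_induction
        (fun x => mul (tmOf R V 0 (PiTensorProduct.tprod R (fun i : Fin 0 => i.elim0))) x = x)
        ?_ ?_ ?_ ?_ x
      · simp
      · intro n v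
        exact ShuffleAux.one_mul_gen mul hmul n v
      · intro c x h
        simp only [map_smul, h]
      · intro a b ha hb
        simp only [map_add, ha, hb]
    · refine ShuffleAux.tm_induction
        (fun x => mul x (tmOf R V 0 (PiTensorProduct.tprod R (fun i : Fin 0 => i.elim0))) = x)
        ?_ ?_ ?_ ?_ x
      · simp
      · intro n v
        exact ShuffleAux.mul_one_gen mul hmul n v
      · intro c x h
        simp only [map_smul, LinearMap.smul_apply, h]
      · intro a b ha hb
        simp only [map_add, LinearMap.add_apply, ha, hb]
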